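/- Let q ≥ 5 and 1 ≤ w ≤ (q+1)/2 be integers. Then ∏_{i=1}^{w} (1 - (i-2)/(q+1-i)) < e^{-S}, where S = -w + (q-1) ln((q+1)/(q+1-w)). -/

import Mathlib

open Finset

lemma harm_log (q : ℝ) : ∀ w : ℕ, (w : ℝ) ≤ q →
    Real.log (q + 1) - Real.log (q + 1 - w) ≤ ∑ i ∈ Finset.Icc 1 w, 1 / (q + 1 - i) := by
  intro w
  induction w with
  | zero => intro _; simp
  | succ n ih =>
    intro h
    have hn1 : ((n : ℝ) + 1) ≤ q := by push_cast at h; linarith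
    have hn : (n : ℝ) ≤ q := by linarith
    have hpos : (0:ℝ) < q - n := by linarith
    rw [Finset.sum_Icc_succ_top (by omega)]
    have key : Real.log (q + 1 - n) - Real.log (q + 1 - ((n:ℝ)+1)) ≤ 1 / (q + 1 - ((n:ℝ)+1)) := by
      have h1 : q + 1 - ((n:ℝ) + 1) = q - n := by ring
      rw [h1]
      have h2 : Real.log (q + 1 - n) - Real.log (q - n) = Real.log ((q + 1 - n)/(q - n)) := by
        rw [Real.log_div (by linarith) (by linarith)]
      rw [h2]
      have hlog := Real.log_le_sub_one_of_pos (x := (q + 1 - (n:ℝ))/(q - n))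
        (div_pos (by linarith) hpos)
      have h3 : (q + 1 - (n:ℝ))/(q - n) - 1 = 1 / (q - n) := by
        field_simp
        ring
      linarith [h3 ▸ hlog]
    have hih := ih hn
    push_cast
    push_cast at key
    linarith

theorem prod_lt_exp_neg_S (q w : ℕ) (hq : 5 ≤ q) (hw1 : 1 ≤ w) (hw2 : 2 * w ≤ q + 1) :
    ∏ i ∈ Finset.Icc 1 w, (1 - ((i : ℝ) - 2) / ((q : ℝ) + 1 - i)) <
      Real.exp (-(-(w : ℝ) + ((q : ℝ) - 1) * Real.log (((q : ℝ) + 1) / ((q : ℝ) + 1 - w)))) := by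
  have hqR : (5:ℝ) ≤ q := by exact_mod_cast hq
  have hw2R : 2 * (w:ℝ) ≤ (q:ℝ) + 1 := by exact_mod_cast hw2
  have hw1R : (1:ℝ) ≤ w := by exact_mod_cast hw1
  have hwq : (w:ℝ) ≤ q := by linarith
  have hden : ∀ i ∈ Finset.Icc 1 w, (0:ℝ) < (q:ℝ) + 1 - i := by
    intro i hi
    rw [Finset.mem_Icc] at hi
    have : (i:ℝ) ≤ w := by exact_mod_cast hi.2
    linarith
  -- step 1: strict product bound
  have step1 : ∏ i ∈ Finset.Icc 1 w, (1 - ((i : ℝ) - 2) / ((q : ℝ) + 1 - i)) <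
      ∏ i ∈ Finset.Icc 1 w, Real.exp (-(((i : ℝ) - 2) / ((q : ℝ) + 1 - i))) := by
    apply Finset.prod_lt_prod
    · intro i hi
      have hd := hden i hi
      rw [Finset.mem_Icc] at hi
      have hiw : (i:ℝ) ≤ w := by exact_mod_cast hi.2
      rw [sub_pos, div_lt_one hd]
      linarith
    · intro i _
      have := Real.add_one_le_exp (-(((i : ℝ) - 2) / ((q : ℝ) + 1 - i)))
      linarith
    · refine ⟨1, Finset.mem_Icc.mpr ⟨le_refl 1, hw1⟩, ?_⟩
      have hq0 : (0:ℝ) < q := by linarith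
      have hne : -(((1 : ℝ) - 2) / ((q : ℝ) + 1 - 1)) ≠ 0 := by
        have heq : -(((1:ℝ) - 2) / ((q:ℝ) + 1 - 1)) = 1/q := by
          rw [show ((q:ℝ) + 1 - 1) = q by ring]
          norm_num
          ring
        rw [heq]
        positivity
      have := Real.add_one_lt_exp hne
      push_cast
      linarith
  rw [← Real.exp_sum] at step1
  refine step1.trans_le (Real.exp_le_exp.mpr ?_)
  -- step 2: sum identity and harmonic bound
  have hsum : ∑ i ∈ Finset.Icc 1 w, (((i : ℝ) - 2) / ((q : ℝ) + 1 - i)) =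
      -(w:ℝ) + ((q:ℝ) - 1) * ∑ i ∈ Finset.Icc 1 w, 1 / ((q:ℝ) + 1 - i) := by
    have : ∀ i ∈ Finset.Icc 1 w, ((i : ℝ) - 2) / ((q : ℝ) + 1 - i)
        = -1 + ((q:ℝ) - 1) * (1 / ((q:ℝ) + 1 - i)) := by
      intro i hi
      have hd := (hden i hi).ne'
      field_simp
      ring
    rw [Finset.sum_congr rfl this, Finset.sum_add_distrib, ← Finset.mul_sum,
      Finset.sum_const, Nat.card_Icc]
    push_cast
    ring
  have hharm := harm_log (q:ℝ) w hwq
  have hlogdiv : Real.log (((q : ℝ) + 1) / ((q : ℝ) + 1 - w)) =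
      Real.log ((q:ℝ) + 1) - Real.log ((q:ℝ) + 1 - w) := by
    rw [Real.log_div (by linarith) (by linarith)]
  rw [hlogdiv, Finset.sum_neg_distrib, hsum]
  have hq1 : (0:ℝ) ≤ (q:ℝ) - 1 := by linarith
  nlinarith [mul_le_mul_of_nonneg_left hharm hq1]
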